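/- arXiv:1205.1281 — 5 statements merged into one kernel-verified Lean document; each statement's English description precedes it below -/
import Mathlib

section
/- Let k ≥ 1, let 0 < d_1 ≤ d_2 ≤ … ≤ d_k be reals and 0 < g_1, …, g_k ≤ 1. Then d_1·g_1 + d_2·g_2·(1−g_1) + … + d_k·g_k·(1−g_1)(1−g_2)⋯(1−g_{k−1}) ≤ (1/∑_{s=1}^k g_s) · (∑_{s=1}^k d_s g_s) · (∑_{t=1}^k g_t ∏_{z=1}^{t−1} (1−g_z)). -/
/-- For `0 < d_1 ≤ … ≤ d_k` and `0 < g_s ≤ 1`,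
`∑_s d_s g_s ∏_{z<s}(1-g_z) ≤ (1/∑ g_s) (∑ d_s g_s) (∑_t g_t ∏_{z<t}(1-g_z))`. -/
theorem expected_distance_inequality (k : ℕ) (hk : 1 ≤ k) (d g : ℕ → ℝ)
    (hd : ∀ s < k, 0 < d s)
    (hdmono : ∀ s t, s ≤ t → t < k → d s ≤ d t)
    (hg : ∀ s < k, 0 < g s ∧ g s ≤ 1) :
    ∑ s ∈ Finset.range k, d s * g s * ∏ z ∈ Finset.range s, (1 - g z)
      ≤ (1 / ∑ s ∈ Finset.range k, g s) * (∑ s ∈ Finset.range k, d s * g s) *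
          (∑ t ∈ Finset.range k, g t * ∏ z ∈ Finset.range t, (1 - g z)) := by
  classical
  set r := Finset.range k with hr
  set P : ℕ → ℝ := fun s => ∏ z ∈ Finset.range s, (1 - g z) with hP
  -- nonnegativity and monotonicity of P on range k
  have hPnonneg : ∀ s, s ≤ k → 0 ≤ P s := by
    intro s hs
    apply Finset.prod_nonneg
    intro z hz
    have hz' : z < k := lt_of_lt_of_le (Finset.mem_range.mp hz) hs
    linarith [(hg z hz').2]
  have hPmono : ∀ s t, s ≤ t → t ≤ k → P t ≤ P s := by
    intro s t hst htk
    have : P t = P s * ∏ z ∈ Finset.Ico s t, (1 - g z) := by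
      rw [hP]
      simp only
      rw [← Finset.prod_range_mul_prod_Ico _ hst]
    rw [this]
    have h1 : ∏ z ∈ Finset.Ico s t, (1 - g z) ≤ 1 := by
      apply Finset.prod_le_one
      · intro z hz
        have hz' : z < k := lt_of_lt_of_le (Finset.mem_Ico.mp hz).2 htk
        linarith [(hg z hz').2]
      · intro z hz
        have hz' : z < k := lt_of_lt_of_le (Finset.mem_Ico.mp hz).2 htk
        linarith [(hg z hz').1, (hg z hz').2]
    have h2 := hPnonneg s (le_trans hst htk)
    nlinarith
  set A := ∑ s ∈ r, d s * g s with hA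
  set B := ∑ t ∈ r, g t * P t with hB
  set G := ∑ s ∈ r, g s with hG
  set C := ∑ s ∈ r, d s * g s * P s with hC
  have hgnn : ∀ s ∈ r, 0 ≤ g s := fun s hs => le_of_lt (hg s (Finset.mem_range.mp hs)).1
  have hGpos : 0 < G := by
    rw [hG, hr]
    apply Finset.sum_pos
    · intro s hs
      exact (hg s (Finset.mem_range.mp hs)).1
    · exact Finset.nonempty_range_iff.mpr (by omega)
  -- key double-sum nonnegativity
  have key : 0 ≤ ∑ s ∈ r, ∑ t ∈ r, g s * g t * ((d s - d t) * (P t - P s)) := by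
    apply Finset.sum_nonneg
    intro s hs
    apply Finset.sum_nonneg
    intro t ht
    have hsk := Finset.mem_range.mp hs
    have htk := Finset.mem_range.mp ht
    have hgg : 0 ≤ g s * g t := mul_nonneg (hgnn s hs) (hgnn t ht)
    apply mul_nonneg hgg
    rcases le_total s t with h | h
    · have h1 : d s ≤ d t := hdmono s t h htk
      have h2 : P t ≤ P s := hPmono s t h (le_of_lt htk)
      nlinarith
    · have h1 : d t ≤ d s := hdmono t s h hsk
      have h2 : P s ≤ P t := hPmono t s h (le_of_lt hsk)
      nlinarith
  -- expansion of the double sum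
  have inner : ∀ s ∈ r, ∑ t ∈ r, g s * g t * ((d s - d t) * (P t - P s))
      = (d s * g s) * B - (d s * g s * P s) * G - g s * C + (g s * P s) * A := by
    intro s _
    have : ∀ t ∈ r, g s * g t * ((d s - d t) * (P t - P s))
        = (d s * g s) * (g t * P t) - (d s * g s * P s) * g t
          - g s * (d t * g t * P t) + (g s * P s) * (d t * g t) := by
      intro t _
      ring
    rw [Finset.sum_congr rfl this]
    rw [Finset.sum_add_distrib, Finset.sum_sub_distrib, Finset.sum_sub_distrib,
      ← Finset.mul_sum, ← Finset.mul_sum, ← Finset.mul_sum, ← Finset.mul_sum]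
  have expand : ∑ s ∈ r, ∑ t ∈ r, g s * g t * ((d s - d t) * (P t - P s))
      = 2 * (A * B - G * C) := by
    rw [Finset.sum_congr rfl inner]
    rw [Finset.sum_add_distrib, Finset.sum_sub_distrib, Finset.sum_sub_distrib,
      ← Finset.sum_mul, ← Finset.sum_mul, ← Finset.sum_mul, ← Finset.sum_mul]
    rw [← hA, ← hC, ← hG, ← hB]
    ring
  have main : G * C ≤ A * B := by
    rw [expand] at key
    linarith
  -- conclude
  have : C ≤ (A * B) / G := by
    rw [le_div_iff₀ hGpos]
    calc C * G = G * C := by ring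
      _ ≤ A * B := main
  calc (∑ s ∈ r, d s * g s * P s) = C := rfl
    _ ≤ (A * B) / G := this
    _ = (1 / G) * A * B := by ring
end

section
/- Suppose A is a polynomial-time algorithm that, on any FTFP instance with maximum demand at most |F|, outputs a feasible integral solution of cost at most ρ times the optimal fractional LP cost of that instance, where ρ ≥ 1. Let (x̂, ŷ) and (ẋ, ẏ) be the integer and fractional parts of a complete optimal fractional solution (x*, y*) of an arbitrary instance I, inducing instances Î and İ with demands r̂_j = ∑_i x̂_{ij} and ṙ_j = r_j − r̂_j. Then the combined solution (x̂, ŷ) plus A's output on İ is feasible for I and has cost at most ρ · cost(x*, y*) ≤ ρ · OPT(I). -/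
/-- Demand reduction for FTFP: given a complete optimal fractional solution
`(xs, ys)` of an instance `I` (sites `F`, clients `C`, facility costs `f`,
distances `dist`, demands `r`), split it into its integer part `(⌊xs⌋, ⌊ys⌋)`
and fractional part, the latter inducing the residual instance `İ` with
demands `ṙ_j = ∑_i (xs_{ij} - ⌊xs_{ij}⌋)`.  If algorithm `A` outputs an
integral solution `(xA, yA)` feasible for `İ` whose cost is at most `ρ` times
the cost of every fractional feasible solution of `İ` (in particular, at most
`ρ` times the optimal fractional LP cost of `İ`), then the combined integral
solution `(⌊xs⌋ + xA, ⌊ys⌋ + yA)` is feasible for `I`, has cost at most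
`ρ · cost(xs, ys)`, and hence cost at most `ρ · OPT(I)` (i.e. at most
`ρ` times the cost of every feasible integral solution of `I`). -/
theorem demand_reduction {F C : Type*} [Fintype F] [Fintype C]
    (f : F → ℝ) (dist : F → C → ℝ) (r : C → ℝ) (ρ : ℝ) (hρ : 1 ≤ ρ)
    (hf : ∀ i, 0 ≤ f i) (hd : ∀ i j, 0 ≤ dist i j)
    (xs : F → C → ℝ) (ys : F → ℝ)
    (hxnn : ∀ i j, 0 ≤ xs i j) (hxy : ∀ i j, xs i j ≤ ys i)
    (hfeas : ∀ j, r j ≤ ∑ i, xs i j)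
    (hcomp : ∀ i j, 0 < xs i j → xs i j = ys i)
    (hopt : ∀ (x : F → C → ℝ) (y : F → ℝ),
      (∀ i j, 0 ≤ x i j) → (∀ i j, x i j ≤ y i) → (∀ j, r j ≤ ∑ i, x i j) →
      (∑ i, f i * ys i) + ∑ i, ∑ j, dist i j * xs i j
        ≤ (∑ i, f i * y i) + ∑ i, ∑ j, dist i j * x i j)
    (xA : F → C → ℕ) (yA : F → ℕ)
    (hAxy : ∀ i j, xA i j ≤ yA i)
    (hAfeas : ∀ j, (∑ i, (xs i j - (⌊xs i j⌋ : ℝ))) ≤ ∑ i, (xA i j : ℝ))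
    (hAcost : ∀ (x : F → C → ℝ) (y : F → ℝ),
      (∀ i j, 0 ≤ x i j) → (∀ i j, x i j ≤ y i) →
      (∀ j, (∑ i, (xs i j - (⌊xs i j⌋ : ℝ))) ≤ ∑ i, x i j) →
      (∑ i, f i * (yA i : ℝ)) + ∑ i, ∑ j, dist i j * (xA i j : ℝ)
        ≤ ρ * ((∑ i, f i * y i) + ∑ i, ∑ j, dist i j * x i j)) :
    (∀ i j, (⌊xs i j⌋.toNat + xA i j : ℕ) ≤ (⌊ys i⌋.toNat + yA i : ℕ)) ∧
    (∀ j, r j ≤ ∑ i, ((⌊xs i j⌋.toNat + xA i j : ℕ) : ℝ)) ∧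
    ((∑ i, f i * ((⌊ys i⌋.toNat + yA i : ℕ) : ℝ))
       + ∑ i, ∑ j, dist i j * ((⌊xs i j⌋.toNat + xA i j : ℕ) : ℝ)
      ≤ ρ * ((∑ i, f i * ys i) + ∑ i, ∑ j, dist i j * xs i j)) ∧
    (∀ (xo : F → C → ℕ) (yo : F → ℕ),
      (∀ i j, xo i j ≤ yo i) → (∀ j, r j ≤ ∑ i, (xo i j : ℝ)) →
      (∑ i, f i * ((⌊ys i⌋.toNat + yA i : ℕ) : ℝ))
        + ∑ i, ∑ j, dist i j * ((⌊xs i j⌋.toNat + xA i j : ℕ) : ℝ)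
      ≤ ρ * ((∑ i, f i * (yo i : ℝ)) + ∑ i, ∑ j, dist i j * (xo i j : ℝ))) := by

  classical
  have hxnn0 : ∀ i j, (0:ℤ) ≤ ⌊xs i j⌋ := fun i j => Int.floor_nonneg.mpr (hxnn i j)
  set y' : F → ℝ := fun i => max (ys i) 0 with hy'def
  have hy'nn : ∀ i, 0 ≤ y' i := fun i => le_max_right _ _
  have hcx : ∀ i j, ((⌊xs i j⌋.toNat : ℕ) : ℝ) = ((⌊xs i j⌋ : ℤ) : ℝ) := by
    intro i j
    rw [← Int.cast_natCast, Int.toNat_of_nonneg (hxnn0 i j)]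
  have hcy : ∀ i, ((⌊ys i⌋.toNat : ℕ) : ℝ) = ((⌊y' i⌋ : ℤ) : ℝ) := by
    intro i
    rcases le_or_gt 0 (ys i) with h | h
    · have hy : y' i = ys i := max_eq_left h
      rw [hy, ← Int.cast_natCast, Int.toNat_of_nonneg (Int.floor_nonneg.mpr h)]
    · have hy : y' i = 0 := max_eq_right h.le
      have h1 : ⌊ys i⌋ ≤ 0 := by
        have := Int.floor_le_floor h.le
        simp at this
        exact this
      rw [hy, Int.toNat_eq_zero.mpr h1]
      simp
  -- fractional parts
  have hfract : ∀ i j, Int.fract (xs i j) ≤ Int.fract (y' i) := by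
    intro i j
    rcases (hxnn i j).eq_or_lt with h | h
    · rw [← h]
      simpa using Int.fract_nonneg (y' i)
    · have h1 : xs i j = ys i := hcomp i j h
      have h2 : y' i = ys i := max_eq_left ((hxnn i j).trans (hxy i j))
      rw [h2, ← h1]
  -- key equality : ∑ f y' = ∑ f ys
  have heq : ∑ i, f i * y' i = ∑ i, f i * ys i := by
    have le1 : ∑ i, f i * ys i ≤ ∑ i, f i * y' i :=
      Finset.sum_le_sum fun i _ => mul_le_mul_of_nonneg_left (le_max_left _ _) (hf i)
    have hg2 : ∀ i j, xs i j ≤ 2 * ys i - y' i := by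
      intro i j
      have h0 : 0 ≤ ys i := (hxnn i j).trans (hxy i j)
      have h2 : y' i = ys i := max_eq_left h0
      rw [h2]
      have := hxy i j
      linarith
    have h := hopt xs (fun i => 2 * ys i - y' i) hxnn hg2 hfeas
    have h3 : ∑ i, f i * (2 * ys i - y' i)
        = 2 * (∑ i, f i * ys i) - ∑ i, f i * y' i := by
      rw [Finset.mul_sum, ← Finset.sum_sub_distrib]
      exact Finset.sum_congr rfl fun i _ => by ring
    rw [h3] at h
    linarith
  -- split sums
  have hsy : (∑ i, f i * ((⌊y' i⌋ : ℤ) : ℝ)) + ∑ i, f i * Int.fract (y' i)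
      = ∑ i, f i * ys i := by
    rw [← heq, ← Finset.sum_add_distrib]
    refine Finset.sum_congr rfl fun i _ => ?_
    rw [Int.fract]; ring
  have hsx : (∑ i, ∑ j, dist i j * ((⌊xs i j⌋ : ℤ) : ℝ))
        + ∑ i, ∑ j, dist i j * Int.fract (xs i j)
      = ∑ i, ∑ j, dist i j * xs i j := by
    rw [← Finset.sum_add_distrib]
    refine Finset.sum_congr rfl fun i _ => ?_
    rw [← Finset.sum_add_distrib]
    refine Finset.sum_congr rfl fun j _ => ?_
    rw [Int.fract]; ring
  -- algorithm cost bound applied to the fractional part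
  have hA := hAcost (fun i j => Int.fract (xs i j)) (fun i => Int.fract (y' i))
    (fun i j => Int.fract_nonneg _) hfract
    (fun j => le_of_eq (Finset.sum_congr rfl fun i _ => Int.self_sub_floor (xs i j)))
  -- nonnegativity of integer part cost
  have hAnn : 0 ≤ ∑ i, f i * ((⌊y' i⌋ : ℤ) : ℝ) :=
    Finset.sum_nonneg fun i _ => mul_nonneg (hf i)
      (by exact_mod_cast Int.floor_nonneg.mpr (hy'nn i))
  have hBnn : 0 ≤ ∑ i, ∑ j, dist i j * ((⌊xs i j⌋ : ℤ) : ℝ) :=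
    Finset.sum_nonneg fun i _ => Finset.sum_nonneg fun j _ =>
      mul_nonneg (hd i j) (by exact_mod_cast hxnn0 i j)
  -- rewrite the goal's casted sums
  have hL1 : ∑ i, f i * ((⌊ys i⌋.toNat + yA i : ℕ) : ℝ)
      = (∑ i, f i * ((⌊y' i⌋ : ℤ) : ℝ)) + ∑ i, f i * (yA i : ℝ) := by
    rw [← Finset.sum_add_distrib]
    refine Finset.sum_congr rfl fun i _ => ?_
    rw [Nat.cast_add, hcy i]; ring
  have hL2 : ∑ i, ∑ j, dist i j * ((⌊xs i j⌋.toNat + xA i j : ℕ) : ℝ)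
      = (∑ i, ∑ j, dist i j * ((⌊xs i j⌋ : ℤ) : ℝ))
        + ∑ i, ∑ j, dist i j * (xA i j : ℝ) := by
    rw [← Finset.sum_add_distrib]
    refine Finset.sum_congr rfl fun i _ => ?_
    rw [← Finset.sum_add_distrib]
    refine Finset.sum_congr rfl fun j _ => ?_
    rw [Nat.cast_add, hcx i j]; ring
  have hcost : (∑ i, f i * ((⌊ys i⌋.toNat + yA i : ℕ) : ℝ))
       + ∑ i, ∑ j, dist i j * ((⌊xs i j⌋.toNat + xA i j : ℕ) : ℝ)
      ≤ ρ * ((∑ i, f i * ys i) + ∑ i, ∑ j, dist i j * xs i j) := by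
    rw [hL1, hL2]
    nlinarith [mul_nonneg (sub_nonneg.mpr hρ) (add_nonneg hAnn hBnn)]
  refine ⟨?_, ?_, hcost, ?_⟩
  · intro i j
    exact add_le_add (Int.toNat_le_toNat (Int.floor_le_floor (hxy i j))) (hAxy i j)
  · intro j
    have h1 : ∑ i, ((⌊xs i j⌋.toNat + xA i j : ℕ) : ℝ)
        = (∑ i, ((⌊xs i j⌋ : ℤ) : ℝ)) + ∑ i, (xA i j : ℝ) := by
      rw [← Finset.sum_add_distrib]
      refine Finset.sum_congr rfl fun i _ => ?_
      rw [Nat.cast_add, hcx i j]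
    have h2 := hAfeas j
    have h3 : ∑ i, (xs i j - ((⌊xs i j⌋ : ℤ) : ℝ))
        = (∑ i, xs i j) - ∑ i, ((⌊xs i j⌋ : ℤ) : ℝ) := Finset.sum_sub_distrib _ _
    rw [h3] at h2
    rw [h1]
    linarith [hfeas j]
  · intro xo yo h1 h2
    have hopt' := hopt (fun i j => (xo i j : ℝ)) (fun i => (yo i : ℝ))
      (fun i j => Nat.cast_nonneg _) (fun i j => Nat.cast_le.mpr (h1 i j)) h2
    calc (∑ i, f i * ((⌊ys i⌋.toNat + yA i : ℕ) : ℝ))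
        + ∑ i, ∑ j, dist i j * ((⌊xs i j⌋.toNat + xA i j : ℕ) : ℝ)
        ≤ ρ * ((∑ i, f i * ys i) + ∑ i, ∑ j, dist i j * xs i j) := hcost
      _ ≤ ρ * ((∑ i, f i * (yo i : ℝ)) + ∑ i, ∑ j, dist i j * (xo i j : ℝ)) :=
          mul_le_mul_of_nonneg_left hopt' (by linarith)
end

section
/- Let ν be a demand with neighborhood N(ν) and assigned primary demand κ with neighborhood N(κ), where N(κ) \ N(ν) ≠ ∅. Suppose: (i) for all μ ∈ N(ν), d_{μν} ≤ α_ν; (ii) for all μ ∈ N(κ), d_{μκ} ≤ α_κ; (iii) C^avg_κ + α_κ ≤ C^avg_ν + α_ν, where C^avg_η = D(N(η), η) denotes a weighted average of distances d_{μη} over μ ∈ N(η) with positive weights; (iv) distances satisfy the triangle inequality d_{μν} ≤ d_{μκ} + d_{μ'κ} + d_{μ'ν} for all facilities μ, μ'; (v) N(κ) ∩ N(ν) ≠ ∅. Then D(N(κ) \ N(ν), ν) ≤ C^avg_ν + 2α_ν. -/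
/-- Indirect connection cost bound (Lemma 5 for Algorithm ECHS): if demand `ν`
is assigned to primary demand `κ`, with `N(κ) \ N(ν) ≠ ∅`, `N(κ) ∩ N(ν) ≠ ∅`,
distances in each neighborhood bounded by the dual values, the average-cost
comparison `C^avg_κ + α_κ ≤ C^avg_ν + α_ν`, and the triangle inequality, then
the weighted average distance from `ν` to `N(κ) \ N(ν)` is at most
`C^avg_ν + 2 α_ν`.  Here `D(A, f) = (∑_{μ∈A} f μ · w μ)/(∑_{μ∈A} w μ)`. -/
theorem indirect_connection_bound {ι : Type*} [DecidableEq ι]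
    (Nν Nκ : Finset ι) (w dν dκ : ι → ℝ) (αν ακ Cν Cκ : ℝ)
    (hw : ∀ μ, 0 < w μ)
    (hKdiff : (Nκ \ Nν).Nonempty)
    (hint : (Nκ ∩ Nν).Nonempty)
    (hν : ∀ μ ∈ Nν, dν μ ≤ αν)
    (hκ : ∀ μ ∈ Nκ, dκ μ ≤ ακ)
    (hCν : Cν = (∑ μ ∈ Nν, dν μ * w μ) / (∑ μ ∈ Nν, w μ))
    (hCκ : Cκ = (∑ μ ∈ Nκ, dκ μ * w μ) / (∑ μ ∈ Nκ, w μ))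
    (hPD : Cκ + ακ ≤ Cν + αν)
    (htri : ∀ μ μ', dν μ ≤ dκ μ + dκ μ' + dν μ') :
    (∑ μ ∈ Nκ \ Nν, dν μ * w μ) / (∑ μ ∈ Nκ \ Nν, w μ) ≤ Cν + 2 * αν := by
  classical
  have hWS : 0 < ∑ μ ∈ Nκ \ Nν, w μ := Finset.sum_pos (fun μ _ => hw μ) hKdiff
  have hWT : 0 < ∑ μ ∈ Nκ ∩ Nν, w μ := Finset.sum_pos (fun μ _ => hw μ) hint
  rw [div_le_iff₀ hWS]
  by_cases hcase : ∃ μ' ∈ Nκ ∩ Nν, dκ μ' ≤ Cκ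
  · obtain ⟨μ', hμ'T, hμ'⟩ := hcase
    have hμ'ν : μ' ∈ Nν := (Finset.mem_inter.mp hμ'T).2
    calc ∑ μ ∈ Nκ \ Nν, dν μ * w μ ≤ ∑ μ ∈ Nκ \ Nν, (Cν + 2*αν) * w μ := by
          apply Finset.sum_le_sum
          intro μ hμ
          have hμκ : μ ∈ Nκ := (Finset.mem_sdiff.mp hμ).1
          have h0 := htri μ μ'
          have h1 := hκ μ hμκ
          have h2 := hν μ' hμ'ν
          nlinarith [(hw μ).le]
      _ = (Cν + 2*αν) * ∑ μ ∈ Nκ \ Nν, w μ := by rw [← Finset.mul_sum]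
  · push_neg at hcase
    have hdisj : Disjoint (Nκ \ Nν) (Nκ ∩ Nν) := Finset.disjoint_sdiff_inter Nκ Nν
    have hun : (Nκ \ Nν) ∪ (Nκ ∩ Nν) = Nκ := Finset.sdiff_union_inter Nκ Nν
    have hsplit : ∑ μ ∈ Nκ, dκ μ * w μ
        = ∑ μ ∈ Nκ \ Nν, dκ μ * w μ + ∑ μ ∈ Nκ ∩ Nν, dκ μ * w μ := by
      rw [← Finset.sum_union hdisj, hun]
    have hsplitw : ∑ μ ∈ Nκ, w μ = ∑ μ ∈ Nκ \ Nν, w μ + ∑ μ ∈ Nκ ∩ Nν, w μ := by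
      rw [← Finset.sum_union hdisj, hun]
    have hWκ : 0 < ∑ μ ∈ Nκ, w μ := by rw [hsplitw]; linarith
    have hCκ' : ∑ μ ∈ Nκ, dκ μ * w μ = Cκ * ∑ μ ∈ Nκ, w μ := by
      rw [hCκ]; field_simp
    have hT' : Cκ * (∑ μ ∈ Nκ ∩ Nν, w μ) ≤ ∑ μ ∈ Nκ ∩ Nν, dκ μ * w μ := by
      rw [Finset.mul_sum]
      exact Finset.sum_le_sum fun μ hμ =>
        mul_le_mul_of_nonneg_right (hcase μ hμ).le (hw μ).le
    have hSκ : ∑ μ ∈ Nκ \ Nν, dκ μ * w μ ≤ Cκ * ∑ μ ∈ Nκ \ Nν, w μ := by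
      have : Cκ * ∑ μ ∈ Nκ, w μ
          = Cκ * (∑ μ ∈ Nκ \ Nν, w μ) + Cκ * (∑ μ ∈ Nκ ∩ Nν, w μ) := by
        rw [hsplitw]; ring
      linarith
    obtain ⟨μ', hμ'T⟩ := hint
    have hμ'ν : μ' ∈ Nν := (Finset.mem_inter.mp hμ'T).2
    have hμ'κ : μ' ∈ Nκ := (Finset.mem_inter.mp hμ'T).1
    have key : ∑ μ ∈ Nκ \ Nν, dν μ * w μ
        ≤ ∑ μ ∈ Nκ \ Nν, (dκ μ + ακ + αν) * w μ := by
      apply Finset.sum_le_sum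
      intro μ hμ
      have h0 := htri μ μ'
      have h1 := hκ μ' hμ'κ
      have h2 := hν μ' hμ'ν
      nlinarith [(hw μ).le]
    have hexp : ∑ μ ∈ Nκ \ Nν, (dκ μ + ακ + αν) * w μ
        = ∑ μ ∈ Nκ \ Nν, dκ μ * w μ + (ακ + αν) * ∑ μ ∈ Nκ \ Nν, w μ := by
      rw [Finset.mul_sum, ← Finset.sum_add_distrib]
      exact Finset.sum_congr rfl fun μ _ => by ring
    nlinarith [hWS.le]
end

section
/- Let a demand ν have neighborhood partitioned into disjoint groups G_1, …, G_k with average distances d̄_s = D(G_s, ν) nondecreasing in s, and group selection probabilities g_s ∈ (0,1] with ∑_s g_s = 1. If ν connects to the facility opened in the smallest-index selected group, then the conditional expected connection cost given at least one group is selected is at most ∑_{s=1}^k d̄_s g_s. -/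
/-- Lemma 6 for Algorithm ECHS: if the groups have nondecreasing average
distances `d̄_s` and selection probabilities `g_s ∈ (0,1]` with `∑ g_s = 1`,
then the conditional expected connection cost, given that at least one group
is selected (connecting to the smallest-index selected group), is at most
`∑ d̄_s g_s`. -/
theorem conditional_expected_connection_cost (k : ℕ) (hk : 1 ≤ k)
    (dbar g : ℕ → ℝ)
    (hmono : ∀ s t, s ≤ t → t < k → dbar s ≤ dbar t)
    (hg : ∀ s < k, 0 < g s ∧ g s ≤ 1)
    (hsum : ∑ s ∈ Finset.range k, g s = 1) :
    (∑ s ∈ Finset.range k, dbar s * g s * ∏ z ∈ Finset.range s, (1 - g z)) /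
        (1 - ∏ s ∈ Finset.range k, (1 - g s))
      ≤ ∑ s ∈ Finset.range k, dbar s * g s := by
  set Q : ℕ → ℝ := fun s => ∏ z ∈ Finset.range s, (1 - g z) with hQ
  have hfac : ∀ z < k, 0 ≤ 1 - g z ∧ 1 - g z < 1 := by
    intro z hz
    obtain ⟨h1, h2⟩ := hg z hz
    constructor <;> linarith
  have hQnn : ∀ s, s ≤ k → 0 ≤ Q s := by
    intro s hs
    apply Finset.prod_nonneg
    intro z hz
    exact (hfac z (lt_of_lt_of_le (Finset.mem_range.1 hz) hs)).1
  have hQmono : ∀ s t, s ≤ t → t ≤ k → Q t ≤ Q s := by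
    intro s t hst htk
    induction t with
    | zero => simp_all
    | succ n ih =>
      rcases Nat.lt_or_ge s (n+1) with h | h
      · have hsn : s ≤ n := Nat.lt_succ_iff.1 h
        have hnk : n ≤ k := le_trans (Nat.le_succ n) htk
        have hQn := ih hsn hnk
        have : Q (n+1) = Q n * (1 - g n) := by
          simp [hQ, Finset.prod_range_succ]
        rw [this]
        have h1 : Q n * (1 - g n) ≤ Q n * 1 := by
          apply mul_le_mul_of_nonneg_left _ (hQnn n hnk)
          linarith [(hfac n (lt_of_lt_of_le (Nat.lt_succ_self n) htk)).2]
        linarith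
      · have : s = n + 1 := le_antisymm hst h
        simp [this]
  have hden : 0 < 1 - Q k := by
    have h1 : Q k ≤ Q 1 := hQmono 1 k hk le_rfl
    have h2 : Q 1 = 1 - g 0 := by simp [hQ]
    have := (hfac 0 hk).2
    rw [h2] at h1
    linarith
  -- telescoping: ∑_{t<m} g t * Q t = 1 - Q m
  have htel : ∀ m, m ≤ k → ∑ t ∈ Finset.range m, g t * Q t = 1 - Q m := by
    intro m hm
    induction m with
    | zero => simp [hQ]
    | succ n ih =>
      rw [Finset.sum_range_succ, ih (le_trans (Nat.le_succ n) hm)]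
      have : Q (n+1) = Q n * (1 - g n) := by simp [hQ, Finset.prod_range_succ]
      rw [this]; ring
  have hgnn : ∀ s ∈ Finset.range k, 0 ≤ g s := fun s hs =>
    le_of_lt (hg s (Finset.mem_range.1 hs)).1
  -- key inequality
  have key : ∑ s ∈ Finset.range k, dbar s * g s * Q s
      ≤ (1 - Q k) * ∑ s ∈ Finset.range k, dbar s * g s := by
    have hX : ∑ s ∈ Finset.range k, ∑ t ∈ Finset.range k,
        (dbar s * g s * g t * Q s - dbar s * g s * g t * Q t) ≤ 0 := by
      have hterm : ∀ s ∈ Finset.range k, ∀ t ∈ Finset.range k,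
          (dbar s * g s * g t * Q s - dbar s * g s * g t * Q t)
          + (dbar t * g t * g s * Q t - dbar t * g t * g s * Q s) ≤ 0 := by
        intro s hs t ht
        have hsk := Finset.mem_range.1 hs
        have htk := Finset.mem_range.1 ht
        have hgs := (hg s hsk).1
        have hgt := (hg t htk).1
        have heq : (dbar s * g s * g t * Q s - dbar s * g s * g t * Q t)
            + (dbar t * g t * g s * Q t - dbar t * g t * g s * Q s)
            = g s * g t * ((dbar s - dbar t) * (Q s - Q t)) := by ring
        rw [heq]
        rcases le_total s t with h | h
        · have hd : dbar s ≤ dbar t := hmono s t h htk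
          have hq : Q t ≤ Q s := hQmono s t h (le_of_lt htk)
          have : (dbar s - dbar t) * (Q s - Q t) ≤ 0 :=
            mul_nonpos_of_nonpos_of_nonneg (by linarith) (by linarith)
          exact mul_nonpos_of_nonneg_of_nonpos (by positivity) this
        · have hd : dbar t ≤ dbar s := hmono t s h hsk
          have hq : Q s ≤ Q t := hQmono t s h (le_of_lt hsk)
          have : (dbar s - dbar t) * (Q s - Q t) ≤ 0 :=
            mul_nonpos_of_nonneg_of_nonpos (by linarith) (by linarith)
          exact mul_nonpos_of_nonneg_of_nonpos (by positivity) this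
      have hswap : ∑ s ∈ Finset.range k, ∑ t ∈ Finset.range k,
          (dbar s * g s * g t * Q s - dbar s * g s * g t * Q t)
          = ∑ s ∈ Finset.range k, ∑ t ∈ Finset.range k,
          (dbar t * g t * g s * Q t - dbar t * g t * g s * Q s) :=
        Finset.sum_comm
      have h2X : (∑ s ∈ Finset.range k, ∑ t ∈ Finset.range k,
          (dbar s * g s * g t * Q s - dbar s * g s * g t * Q t))
          + (∑ s ∈ Finset.range k, ∑ t ∈ Finset.range k,
          (dbar s * g s * g t * Q s - dbar s * g s * g t * Q t)) ≤ 0 := by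
        nth_rewrite 2 [hswap]
        rw [← Finset.sum_add_distrib]
        apply Finset.sum_nonpos
        intro s hs
        rw [← Finset.sum_add_distrib]
        exact Finset.sum_nonpos (fun t ht => hterm s hs t ht)
      linarith
    have expand : ∑ s ∈ Finset.range k, ∑ t ∈ Finset.range k,
        (dbar s * g s * g t * Q s - dbar s * g s * g t * Q t)
        = (∑ s ∈ Finset.range k, dbar s * g s * Q s) * (∑ t ∈ Finset.range k, g t)
          - (∑ s ∈ Finset.range k, dbar s * g s) * (∑ t ∈ Finset.range k, g t * Q t) := by
      rw [Finset.sum_mul_sum, Finset.sum_mul_sum, ← Finset.sum_sub_distrib]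
      congr 1; ext s
      rw [← Finset.sum_sub_distrib]
      congr 1; ext t; ring
    rw [expand, hsum, htel k le_rfl] at hX
    linarith
  rw [div_le_iff₀ hden]
  linarith [key]
end

section
/- Let K, V_cls, V_far be a partition of N_cls(κ) (the close neighborhood of primary demand κ) with K = N_cls(κ)\N(ν), V_cls = N_cls(κ)∩N_cls(ν), V_far = N_cls(κ)∩N_far(ν), where K ≠ ∅ and V_cls ≠ ∅. Assume the triangle inequality on distances, d_{μν} ≤ C_cls^max(ν) for μ ∈ V_cls, C_cls^max(ν) ≤ C_far(ν), d_{μκ} ≤ C_cls^max(κ) for μ ∈ N_cls(κ), and C_cls(κ) + C_cls^max(κ) ≤ C_cls(ν) + C_cls^max(ν). If moreover D(K, κ) ≤ C_cls(κ), then D(K, ν) ≤ C_cls(ν) + 2·C_far(ν). -/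
/-- Case 1 of the proof of Lemma 15 (Algorithm EBGS): with
`K, V_cls, V_far` a partition of `N_cls(κ)`, `K, V_cls` nonempty, triangle
inequality, `d_{μν} ≤ C_cls^max(ν)` on `V_cls`, `C_cls^max(ν) ≤ C_far(ν)`,
`d_{μκ} ≤ C_cls^max(κ)` on `N_cls(κ)`, and
`C_cls(κ) + C_cls^max(κ) ≤ C_cls(ν) + C_cls^max(ν)`: if `D(K,κ) ≤ C_cls(κ)`
then `D(K,ν) ≤ C_cls(ν) + 2·C_far(ν)`.  Here
`D(A,f) = (∑_{μ∈A} f μ · w μ)/(∑_{μ∈A} w μ)` with positive weights. -/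
theorem ebgs_lemma15_case1 {ι : Type*} [DecidableEq ι]
    (K Vcls Vfar : Finset ι) (w dν dκ : ι → ℝ)
    (Cclsκ Cmaxκ Cclsν Cmaxν Cfarν : ℝ)
    (hw : ∀ μ, 0 < w μ)
    (hK : K.Nonempty) (hV : Vcls.Nonempty)
    (hd1 : Disjoint K Vcls) (hd2 : Disjoint K Vfar) (hd3 : Disjoint Vcls Vfar)
    (htri : ∀ μ μ', dν μ ≤ dκ μ + dκ μ' + dν μ')
    (hVcls : ∀ μ ∈ Vcls, dν μ ≤ Cmaxν)
    (hmf : Cmaxν ≤ Cfarν)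
    (hκmax : ∀ μ ∈ K ∪ Vcls ∪ Vfar, dκ μ ≤ Cmaxκ)
    (hPD : Cclsκ + Cmaxκ ≤ Cclsν + Cmaxν)
    (hcase : (∑ μ ∈ K, dκ μ * w μ) / (∑ μ ∈ K, w μ) ≤ Cclsκ) :
    (∑ μ ∈ K, dν μ * w μ) / (∑ μ ∈ K, w μ) ≤ Cclsν + 2 * Cfarν := by
  have hS : 0 < ∑ μ ∈ K, w μ := Finset.sum_pos (fun i _ => hw i) hK
  obtain ⟨μ', hμ'⟩ := hV
  have h1 : ∀ μ ∈ K, dν μ ≤ dκ μ + (Cmaxκ + Cmaxν) := by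
    intro μ _
    have h2 := hκmax μ' (by simp [hμ'])
    have h3 := hVcls μ' hμ'
    have := htri μ μ'
    linarith
  have hsum : ∑ μ ∈ K, dν μ * w μ ≤ ∑ μ ∈ K, (dκ μ + (Cmaxκ + Cmaxν)) * w μ :=
    Finset.sum_le_sum fun μ hμ => mul_le_mul_of_nonneg_right (h1 μ hμ) (hw μ).le
  have hsum2 : ∑ μ ∈ K, (dκ μ + (Cmaxκ + Cmaxν)) * w μ
      = (∑ μ ∈ K, dκ μ * w μ) + (Cmaxκ + Cmaxν) * ∑ μ ∈ K, w μ := by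
    simp [add_mul, Finset.sum_add_distrib, Finset.mul_sum]
  have hκ : ∑ μ ∈ K, dκ μ * w μ ≤ Cclsκ * ∑ μ ∈ K, w μ := (div_le_iff₀ hS).mp hcase
  rw [div_le_iff₀ hS]
  nlinarith [mul_le_mul_of_nonneg_right hPD hS.le, mul_le_mul_of_nonneg_right hmf hS.le]
end
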